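/- Let G be a graph and let F be obtained from G by adding, for each vertex v of G, a new pendant vertex v' adjacent only to v. Then G has a cut of size at least k if and only if F has a cut of size at least n + k, where n is the number of vertices of G. -/

import Mathlib

noncomputable def cutSize {V : Type*} (G : SimpleGraph V) (A : Set V) : ℕ :=
  Nat.card {p : V × V // G.Adj p.1 p.2 ∧ p.1 ∈ A ∧ p.2 ∉ A}

def pendantGraph {V : Type*} (G : SimpleGraph V) : SimpleGraph (V ⊕ V) where
  Adj a b := match a, b with
    | Sum.inl u, Sum.inl v => G.Adj u v
    | Sum.inl u, Sum.inr v => u = v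
    | Sum.inr u, Sum.inl v => u = v
    | Sum.inr _, Sum.inr _ => False
  symm := by
    constructor
    rintro (u | u) (v | v) h <;> simp_all <;> exact h.symm
  loopless := by
    constructor
    rintro (u | u) h <;> simp_all

open Sum

def pendantSet {V : Type*} (A : Set V) : Set (V ⊕ V) :=
  fun x => match x with | inl v => v ∈ A | inr v => v ∉ A

open Classical in
noncomputable def fwd {V : Type*} (G : SimpleGraph V) (A : Set V) :
    ({p : V × V // G.Adj p.1 p.2 ∧ p.1 ∈ A ∧ p.2 ∉ A} ⊕ V) →
    {p : (V ⊕ V) × (V ⊕ V) // (pendantGraph G).Adj p.1 p.2 ∧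
      p.1 ∈ pendantSet A ∧ p.2 ∉ pendantSet A} :=
  fun x => match x with
  | Sum.inl ⟨(u, v), h⟩ => ⟨(inl u, inl v), ⟨h.1, h.2.1, h.2.2⟩⟩
  | Sum.inr v =>
      if hv : v ∈ A then ⟨(inl v, inr v), ⟨rfl, hv, fun h => h hv⟩⟩
      else ⟨(inr v, inl v), ⟨rfl, hv, hv⟩⟩

lemma fwd_inj {V : Type*} (G : SimpleGraph V) (A : Set V) :
    Function.Injective (fwd G A) := by
  rintro (⟨⟨u, v⟩, h⟩ | v) (⟨⟨u', v'⟩, h'⟩ | v') hxy <;>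
    simp only [fwd, Subtype.mk.injEq, Prod.mk.injEq] at hxy <;>
    try (split_ifs at hxy)
  · obtain ⟨h1, h2⟩ := hxy
    cases h1; cases h2; rfl
  all_goals simp_all

theorem test : True := trivial

def bwd {V : Type*} (G : SimpleGraph V) (B : Set (V ⊕ V)) :
    {p : (V ⊕ V) × (V ⊕ V) // (pendantGraph G).Adj p.1 p.2 ∧ p.1 ∈ B ∧ p.2 ∉ B} →
    ({p : V × V // G.Adj p.1 p.2 ∧ p.1 ∈ {v | inl v ∈ B} ∧ p.2 ∉ {v | inl v ∈ B}} ⊕ V) :=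
  fun x => match x with
  | ⟨(inl u, inl v), h⟩ => Sum.inl ⟨(u, v), h⟩
  | ⟨(inl u, inr _), _⟩ => Sum.inr u
  | ⟨(inr u, inl _), _⟩ => Sum.inr u
  | ⟨(inr _, inr _), h⟩ => absurd h.1 id

lemma bwd_inj {V : Type*} (G : SimpleGraph V) (B : Set (V ⊕ V)) :
    Function.Injective (bwd G B) := by
  rintro ⟨⟨a | a, b | b⟩, h⟩ ⟨⟨c | c, d | d⟩, h'⟩ hxy <;>
    simp only [bwd, Subtype.mk.injEq, Prod.mk.injEq, Sum.inl.injEq, Sum.inr.injEq,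
      reduceCtorEq] at hxy <;>
    first
    | (exfalso; exact h.1)
    | (exfalso; exact h'.1)
    | (obtain ⟨h1, h2⟩ := hxy; cases h1; cases h2; rfl)
    | (cases hxy; rfl)
    | skip
  all_goals
    obtain rfl := hxy
    obtain e1 : a = b := h.1
    obtain e2 : a = d := h'.1
    subst e2; subst e1
    first
    | rfl
    | exact absurd h'.2.1 h.2.2
    | exact absurd h.2.1 h'.2.2

theorem cut_iff_pendant_cut {V : Type*} [Fintype V] (G : SimpleGraph V) (k : ℕ) :
    (∃ A : Set V, k ≤ cutSize G A) ↔
      (∃ B : Set (V ⊕ V), Fintype.card V + k ≤ cutSize (pendantGraph G) B) := by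
  constructor
  · rintro ⟨A, hA⟩
    refine ⟨pendantSet A, ?_⟩
    have hle := Nat.card_le_card_of_injective _ (fwd_inj G A)
    rw [Nat.card_sum, Nat.card_eq_fintype_card (α := V)] at hle
    calc Fintype.card V + k ≤ Fintype.card V + cutSize G A := by omega
      _ = cutSize G A + Fintype.card V := by omega
      _ ≤ _ := hle
  · rintro ⟨B, hB⟩
    refine ⟨{v | inl v ∈ B}, ?_⟩
    have hle := Nat.card_le_card_of_injective _ (bwd_inj G B)
    rw [Nat.card_sum, Nat.card_eq_fintype_card (α := V)] at hle
    have : cutSize (pendantGraph G) B ≤ cutSize G {v | inl v ∈ B} + Fintype.card V := hle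
    omega
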